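/- arXiv:1109.1579 — 9 statements merged into one kernel-verified Lean document; each statement's English description precedes it below -/
import Mathlib

section
/- Let (V,d) be a finite metric space and S*, C nonempty subsets of V with |S*| ≤ k. Suppose every point of V is satisfied by C with respect to S* (d(C, x^{S*}) ≤ d(x,S*) for all x). Let T ⊆ C be obtained by choosing, for each y ∈ S*, a closest point of C to y. Then |T| ≤ k and for every x ∈ V, d(x, T) ≤ 2·d(x, S*) + d(x, C). -/
/-- If every point of `V` is satisfied by `C` with respect to `S*` (with `|S*| ≤ k`), and
`T` is obtained by picking for each `y ∈ S*` a closest point of `C` to `y`, then `|T| ≤ k`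
and `d(x,T) ≤ 2 d(x,S*) + d(x,C)` for all `x`. -/
theorem stmt1 {V : Type*} [MetricSpace V] [Fintype V] [DecidableEq V]
    (Sstar C : Finset V) (hS : Sstar.Nonempty) (hC : C.Nonempty) (k : ℕ)
    (hcard : Sstar.card ≤ k)
    (σ : V → V) (hσ : ∀ x, σ x ∈ Sstar ∧ dist x (σ x) = Metric.infDist x (Sstar : Set V))
    (hsat : ∀ x : V, Metric.infDist (σ x) (C : Set V) ≤ Metric.infDist x (Sstar : Set V))
    (τ : V → V) (hτ : ∀ y ∈ Sstar, τ y ∈ C ∧ dist y (τ y) = Metric.infDist y (C : Set V))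
    (T : Finset V) (hT : T = Sstar.image τ) :
    T.card ≤ k ∧ ∀ x : V,
      Metric.infDist x (T : Set V) ≤
        2 * Metric.infDist x (Sstar : Set V) + Metric.infDist x (C : Set V) := by
  constructor
  · exact hT ▸ le_trans (Finset.card_image_le) hcard
  · intro x
    obtain ⟨hsS, hsd⟩ := hσ x
    obtain ⟨htC, htd⟩ := hτ (σ x) hsS
    have hmem : τ (σ x) ∈ T := hT ▸ Finset.mem_image_of_mem τ hsS
    have h1 : Metric.infDist x (T : Set V) ≤ dist x (τ (σ x)) :=
      Metric.infDist_le_dist_of_mem (by exact_mod_cast hmem)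
    have h2 : dist x (τ (σ x)) ≤ dist x (σ x) + dist (σ x) (τ (σ x)) := dist_triangle _ _ _
    have h3 : dist (σ x) (τ (σ x)) ≤ Metric.infDist x (Sstar : Set V) := htd ▸ hsat x
    have h4 : (0:ℝ) ≤ Metric.infDist x (C : Set V) := Metric.infDist_nonneg
    linarith [hsd]
end

section
/- Let (V,d) be a finite metric space, S*, C ⊆ V nonempty, and suppose every x ∈ V satisfies d(x,C) ≤ 2·max_{y∈V} d(y,S*). Let T ⊆ C be formed by picking for each point of S* a closest point in C. Then max_{x∈V} d(x,T) ≤ 4·max_{x∈V} d(x,S*). -/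
open Finset

/-- If every `x` has `d(x,C) ≤ 2·max_y d(y,S*)`, and `T ⊆ C` is formed by picking for each
point of `S*` a closest point in `C`, then `max_x d(x,T) ≤ 4·max_x d(x,S*)`. -/
theorem stmt2 {V : Type*} [MetricSpace V] [Fintype V] [DecidableEq V] [Nonempty V]
    (Sstar C : Finset V) (hS : Sstar.Nonempty) (hC : C.Nonempty)
    (hclose : ∀ x : V, Metric.infDist x (C : Set V) ≤
      2 * (univ.sup' univ_nonempty fun y => Metric.infDist y (Sstar : Set V)))
    (τ : V → V) (hτ : ∀ y ∈ Sstar, τ y ∈ C ∧ dist y (τ y) = Metric.infDist y (C : Set V))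
    (T : Finset V) (hT : T = Sstar.image τ) :
    (univ.sup' univ_nonempty fun x => Metric.infDist x (T : Set V)) ≤
      4 * (univ.sup' univ_nonempty fun x => Metric.infDist x (Sstar : Set V)) := by
  set R := univ.sup' univ_nonempty fun y => Metric.infDist y (Sstar : Set V) with hR
  have hR0 : 0 ≤ R := by
    obtain ⟨s, hs⟩ := hS
    calc (0:ℝ) ≤ Metric.infDist s (Sstar : Set V) := Metric.infDist_nonneg
    _ ≤ R := le_sup' (fun y => Metric.infDist y (Sstar : Set V)) (mem_univ s)
  apply sup'_le
  intro x _
  -- pick closest point s ∈ Sstar to x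
  obtain ⟨s, hsS, hsd⟩ := (Sstar.finite_toSet.isCompact).exists_infDist_eq_dist
    (by exact_mod_cast hS.to_set) x
  have hsSmem : s ∈ Sstar := hsS
  have h1 : Metric.infDist x (Sstar : Set V) ≤ R := le_sup' (fun y => Metric.infDist y (Sstar : Set V)) (mem_univ x)
  have h2 : dist s (τ s) ≤ 2 * R := (hτ s hsSmem).2 ▸ hclose s
  have hτT : τ s ∈ T := by rw [hT]; exact mem_image_of_mem τ hsSmem
  calc Metric.infDist x (T : Set V) ≤ dist x (τ s) :=
        Metric.infDist_le_dist_of_mem (by exact_mod_cast hτT)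
    _ ≤ dist x s + dist s (τ s) := dist_triangle _ _ _
    _ ≤ R + 2 * R := by
        have : dist x s ≤ R := by rw [← hsd]; exact h1
        linarith
    _ ≤ 4 * R := by linarith
end

section
/- Let (V,d) be a finite metric space, k ≥ 1, and let OPT = min over S ⊆ V with |S| ≤ k of max_{x∈V} d(x,S) (the optimal k-center cost). Let C ⊆ V be nonempty and suppose max_{x∈V} d(x,C) ≤ 2·OPT. If A is an α-approximation for k-center restricted to C (i.e., A outputs S ⊆ C with |S| ≤ k and max_{x∈C} d(x,S) ≤ α · min over k-subsets S' of C of max_{x∈C} d(x,S')), then the output S of A satisfies max_{x∈V} d(x,S) ≤ (4α + 2)·OPT. -/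
open Finset

/-- If `max_x d(x,C) ≤ 2·OPT` and `S` is an `α`-approximate `k`-center solution on `C`
(with centers from `C`), then `max_x d(x,S) ≤ (4α+2)·OPT`. -/
theorem stmt3 {V : Type*} [MetricSpace V] [Fintype V] [Nonempty V]
    (k : ℕ) (hk : 1 ≤ k) (α : ℝ) (hα : 1 ≤ α) (OPT : ℝ)
    (hOPT : IsLeast {r : ℝ | ∃ S : Finset V, S.Nonempty ∧ S.card ≤ k ∧
      r = univ.sup' univ_nonempty fun x => Metric.infDist x (S : Set V)} OPT)
    (C : Finset V) (hC : C.Nonempty)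
    (hclose : ∀ x : V, Metric.infDist x (C : Set V) ≤ 2 * OPT)
    (S : Finset V) (hSC : S ⊆ C) (hSne : S.Nonempty) (hScard : S.card ≤ k)
    (happrox : ∀ S' : Finset V, S' ⊆ C → S'.Nonempty → S'.card ≤ k →
      (C.sup' hC fun x => Metric.infDist x (S : Set V)) ≤
        α * (C.sup' hC fun x => Metric.infDist x (S' : Set V))) :
    ∀ x : V, Metric.infDist x (S : Set V) ≤ (4 * α + 2) * OPT := by
  classical
  obtain ⟨⟨Sstar, hSsne, hSscard, hOPTeq⟩, hlb⟩ := hOPT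
  -- OPT ≥ 0
  have hOPT0 : 0 ≤ OPT := by
    obtain ⟨x⟩ := (inferInstance : Nonempty V)
    have := Finset.le_sup' (fun x => Metric.infDist x (Sstar : Set V))
      (Finset.mem_univ x)
    rw [hOPTeq]
    exact le_trans (Metric.infDist_nonneg) this
  -- nearest point in C
  have hCne : (C : Set V).Nonempty := by exact_mod_cast hC
  have hnear : ∀ x : V, ∃ c ∈ C, dist x c ≤ 2 * OPT := by
    intro x
    obtain ⟨c, hcC, hce⟩ := ((C : Set V).toFinite.isCompact).exists_infDist_eq_dist hCne x
    exact ⟨c, by exact_mod_cast hcC, by rw [← hce]; exact hclose x⟩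
  choose g hgC hgd using hnear
  set S' : Finset V := Sstar.image g with hS'
  have hS'sub : S' ⊆ C := by
    intro c hc
    obtain ⟨s, _, rfl⟩ := Finset.mem_image.mp hc
    exact hgC s
  have hS'ne : S'.Nonempty := hSsne.image g
  have hS'card : S'.card ≤ k := le_trans (Finset.card_image_le) hSscard
  -- every point of C is within 3·OPT of S'
  have hSsne' : (Sstar : Set V).Nonempty := by exact_mod_cast hSsne
  have hcost : ∀ x : V, Metric.infDist x (S' : Set V) ≤ 3 * OPT := by
    intro x
    obtain ⟨s, hsS, hse⟩ :=
      ((Sstar : Set V).toFinite.isCompact).exists_infDist_eq_dist hSsne' x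
    have hsS : s ∈ Sstar := by exact_mod_cast hsS
    have hxs : dist x s ≤ OPT := by
      rw [← hse, hOPTeq]
      exact Finset.le_sup' (fun x => Metric.infDist x (Sstar : Set V)) (Finset.mem_univ x)
    have hgs : g s ∈ (S' : Set V) := by
      simp only [hS', Finset.coe_image, Set.mem_image]
      exact ⟨s, by exact_mod_cast hsS, rfl⟩
    calc Metric.infDist x (S' : Set V) ≤ dist x (g s) := Metric.infDist_le_dist_of_mem hgs
      _ ≤ dist x s + dist s (g s) := dist_triangle _ _ _
      _ ≤ OPT + 2 * OPT := add_le_add hxs (hgd s)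
      _ = 3 * OPT := by ring
  have hsup' : (C.sup' hC fun x => Metric.infDist x (S' : Set V)) ≤ 3 * OPT :=
    Finset.sup'_le _ _ fun x _ => hcost x
  have hSbound : (C.sup' hC fun x => Metric.infDist x (S : Set V)) ≤ α * (3 * OPT) := by
    refine le_trans (happrox S' hS'sub hS'ne hS'card) ?_
    exact mul_le_mul_of_nonneg_left hsup' (by linarith)
  intro x
  obtain ⟨c, hcC', hce⟩ := ((C : Set V).toFinite.isCompact).exists_infDist_eq_dist hCne x
  have hcC : c ∈ C := by exact_mod_cast hcC'
  have hd : dist x c ≤ 2 * OPT := by rw [← hce]; exact hclose x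
  have hcS : Metric.infDist c (S : Set V) ≤ α * (3 * OPT) :=
    le_trans (Finset.le_sup' (fun x => Metric.infDist x (S : Set V)) hcC) hSbound
  have htri : Metric.infDist x (S : Set V) ≤ Metric.infDist c (S : Set V) + dist x c :=
    Metric.infDist_le_infDist_add_dist
  nlinarith [htri, hcS, hd]
end

section
/- Let (V,d) be a finite metric space, S* ⊆ V with |S*| ≤ k, and C ⊆ V. Let U be the set of points unsatisfied by C with respect to S*. Suppose there is an injective map p : U → V \ U with d(p(x), S*) ≥ d(x, C) for all x ∈ U. Then Σ_{x∈V} d(x,C) ≤ 3·Σ_{x∈V} d(x,S*). -/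
open Finset

/-- If the unsatisfied points `U` admit an injective proxy map `p : U → V \ U` with
`d(p(x),S*) ≥ d(x,C)`, then `Σ_x d(x,C) ≤ 3·Σ_x d(x,S*)`. -/
theorem stmt4 {V : Type*} [MetricSpace V] [Fintype V]
    (Sstar C : Finset V) (hS : Sstar.Nonempty) (hC : C.Nonempty)
    (k : ℕ) (hcard : Sstar.card ≤ k)
    (σ : V → V) (hσ : ∀ x, σ x ∈ Sstar ∧ dist x (σ x) = Metric.infDist x (Sstar : Set V))
    (U : Finset V)
    (hU : ∀ x : V, x ∈ U ↔
      ¬ Metric.infDist (σ x) (C : Set V) ≤ Metric.infDist x (Sstar : Set V))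
    (p : V → V) (hpinj : Set.InjOn p (U : Set V))
    (hpmaps : ∀ x ∈ U, p x ∉ U)
    (hpdist : ∀ x ∈ U, Metric.infDist x (C : Set V) ≤ Metric.infDist (p x) (Sstar : Set V)) :
    ∑ x : V, Metric.infDist x (C : Set V) ≤ 3 * ∑ x : V, Metric.infDist x (Sstar : Set V) := by
  classical
  have hSne : (Sstar : Set V).Nonempty := by exact_mod_cast hS
  have hnonneg : ∀ x : V, 0 ≤ Metric.infDist x (Sstar : Set V) := fun x =>
    Metric.infDist_nonneg
  -- satisfied points: d(x,C) ≤ 2 d(x,S*)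
  have hsat : ∀ x ∈ Uᶜ, Metric.infDist x (C : Set V) ≤ 2 * Metric.infDist x (Sstar : Set V) := by
    intro x hx
    have hx' : Metric.infDist (σ x) (C : Set V) ≤ Metric.infDist x (Sstar : Set V) := by
      by_contra h
      exact (Finset.mem_compl.mp hx) ((hU x).mpr h)
    calc Metric.infDist x (C : Set V)
        ≤ Metric.infDist (σ x) (C : Set V) + dist x (σ x) :=
          Metric.infDist_le_infDist_add_dist
      _ ≤ Metric.infDist x (Sstar : Set V) + Metric.infDist x (Sstar : Set V) := by
          have := (hσ x).2
          linarith
      _ = 2 * Metric.infDist x (Sstar : Set V) := by ring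
  -- unsatisfied points
  have himg : U.image p ⊆ Uᶜ := by
    intro y hy
    obtain ⟨x, hx, rfl⟩ := Finset.mem_image.mp hy
    exact Finset.mem_compl.mpr (hpmaps x hx)
  have hunsat : ∑ x ∈ U, Metric.infDist x (C : Set V)
      ≤ ∑ x ∈ Uᶜ, Metric.infDist x (Sstar : Set V) := by
    calc ∑ x ∈ U, Metric.infDist x (C : Set V)
        ≤ ∑ x ∈ U, Metric.infDist (p x) (Sstar : Set V) :=
          Finset.sum_le_sum hpdist
      _ = ∑ y ∈ U.image p, Metric.infDist y (Sstar : Set V) :=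
          (Finset.sum_image (f := fun y => Metric.infDist y (Sstar : Set V)) (fun a ha b hb h => hpinj ha hb h)).symm
      _ ≤ ∑ x ∈ Uᶜ, Metric.infDist x (Sstar : Set V) :=
          Finset.sum_le_sum_of_subset_of_nonneg himg (fun x _ _ => hnonneg x)
  have hsplit : ∀ f : V → ℝ, ∑ x : V, f x = ∑ x ∈ U, f x + ∑ x ∈ Uᶜ, f x := by
    intro f
    exact (Finset.sum_add_sum_compl U f).symm
  rw [hsplit, hsplit]
  have h2 : ∑ x ∈ Uᶜ, Metric.infDist x (C : Set V)
      ≤ ∑ x ∈ Uᶜ, 2 * Metric.infDist x (Sstar : Set V) := Finset.sum_le_sum hsat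
  have h3 : 0 ≤ ∑ x ∈ U, Metric.infDist x (Sstar : Set V) :=
    Finset.sum_nonneg fun x _ => hnonneg x
  have h5 : ∑ x ∈ Uᶜ, 2 * Metric.infDist x (Sstar : Set V)
      = 2 * ∑ x ∈ Uᶜ, Metric.infDist x (Sstar : Set V) := by
    rw [Finset.mul_sum]
  linarith
end

section
/- Let (V,d) be a finite metric space, k ≥ 1, and OPT = min over k-subsets S of V of Σ_{x∈V} d(x,S) (optimal k-median cost). Let C ⊆ V be nonempty with Σ_{x∈V} d(x,C) ≤ 3·OPT. Then the optimal k-median cost restricted to choosing centers from C, i.e., min over S ⊆ C with |S| ≤ k of Σ_{x∈V} d(x,S), is at most 5·OPT. -/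
open Metric

lemma infDist_eq_of_min {V : Type*} [MetricSpace V] (x : V) (S : Finset V)
    (s : V) (hs : s ∈ S) (hmin : ∀ s' ∈ S, dist x s ≤ dist x s') :
    Metric.infDist x (S : Set V) = dist x s := by
  refine le_antisymm (Metric.infDist_le_dist_of_mem (by exact_mod_cast hs)) ?_
  by_contra h
  obtain ⟨y, hy, hlt⟩ := (Metric.infDist_lt_iff ⟨s, by exact_mod_cast hs⟩).mp (lt_of_not_ge h)
  exact absurd hlt (not_lt.mpr (hmin y (by exact_mod_cast hy)))

/-- If `Σ_x d(x,C) ≤ 3·OPT`, then the optimal `k`-median cost with centers restricted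
to `C` is at most `5·OPT`. -/
theorem stmt5 {V : Type*} [MetricSpace V] [Fintype V] [Nonempty V]
    (k : ℕ) (hk : 1 ≤ k) (OPT : ℝ)
    (hOPT : IsLeast {r : ℝ | ∃ S : Finset V, S.Nonempty ∧ S.card ≤ k ∧
      r = ∑ x : V, Metric.infDist x (S : Set V)} OPT)
    (C : Finset V) (hC : C.Nonempty)
    (hclose : ∑ x : V, Metric.infDist x (C : Set V) ≤ 3 * OPT) :
    ∃ S : Finset V, S ⊆ C ∧ S.Nonempty ∧ S.card ≤ k ∧
      ∑ x : V, Metric.infDist x (S : Set V) ≤ 5 * OPT := by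
  classical
  obtain ⟨⟨S, hSne, hScard, hOPTeq⟩, -⟩ := hOPT
  -- nearest point of C to any point
  have hf : ∀ s : V, ∃ c ∈ C, ∀ c' ∈ C, dist s c ≤ dist s c' :=
    fun s => C.exists_min_image (fun c => dist s c) hC
  choose f hfC hfmin using hf
  refine ⟨S.image f, ?_, hSne.image f, le_trans (Finset.card_image_le) hScard, ?_⟩
  · intro t ht
    obtain ⟨s, _, rfl⟩ := Finset.mem_image.mp ht
    exact hfC s
  · have key : ∀ x : V, Metric.infDist x ((S.image f : Finset V) : Set V) ≤
        2 * Metric.infDist x (S : Set V) + Metric.infDist x (C : Set V) := by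
      intro x
      obtain ⟨s, hsS, hsmin⟩ := S.exists_min_image (fun s => dist x s) hSne
      obtain ⟨c, hcC, hcmin⟩ := C.exists_min_image (fun c => dist x c) hC
      have hS : Metric.infDist x (S : Set V) = dist x s := infDist_eq_of_min x S s hsS hsmin
      have hCd : Metric.infDist x (C : Set V) = dist x c := infDist_eq_of_min x C c hcC hcmin
      have h1 : Metric.infDist x ((S.image f : Finset V) : Set V) ≤ dist x (f s) :=
        Metric.infDist_le_dist_of_mem (by exact_mod_cast Finset.mem_image_of_mem f hsS)
      have h2 : dist x (f s) ≤ dist x s + dist s (f s) := dist_triangle x s (f s)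
      have h3 : dist s (f s) ≤ dist s c := hfmin s c hcC
      have h4 : dist s c ≤ dist s x + dist x c := dist_triangle s x c
      rw [hS, hCd]
      have := dist_comm s x
      nlinarith [h1, h2, h3, h4]
    calc ∑ x : V, Metric.infDist x ((S.image f : Finset V) : Set V)
        ≤ ∑ x : V, (2 * Metric.infDist x (S : Set V) + Metric.infDist x (C : Set V)) :=
          Finset.sum_le_sum fun x _ => key x
      _ = 2 * (∑ x : V, Metric.infDist x (S : Set V)) + ∑ x : V, Metric.infDist x (C : Set V) := by
          rw [Finset.sum_add_distrib, Finset.mul_sum]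
      _ ≤ 2 * OPT + 3 * OPT := by rw [← hOPTeq]; linarith
      _ = 5 * OPT := by ring
end

section
/- Let (V,d) be a finite metric space and C ⊆ V nonempty. For each y ∈ C define the weight w(y) = |{x ∈ V \ C : the chosen closest point of C to x equals y}| + 1, where each x ∈ V \ C is assigned to a unique closest point x^C ∈ C. Then for any nonempty T* ⊆ C: Σ_{y∈C} w(y)·d(y,T*) ≤ 2·Σ_{x∈V} d(x,T*). In particular, the optimal weighted k-median cost on (C,w) with centers from C is at most twice the optimal k-median cost on V with centers restricted to C. -/
open Finset

/-- With weights `w(y) = |{x ∈ V \ C : x^C = y}| + 1`, for any nonempty `T* ⊆ C` we have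
`Σ_{y∈C} w(y)·d(y,T*) ≤ 2·Σ_{x∈V} d(x,T*)`; in particular the optimal weighted `k`-median
cost on `(C,w)` is at most twice the optimal `k`-median cost on `V` with centers from `C`. -/
theorem stmt6 {V : Type*} [MetricSpace V] [Fintype V] [DecidableEq V]
    (C : Finset V) (hC : C.Nonempty)
    (xc : V → V) (hxc : ∀ x, xc x ∈ C ∧ dist x (xc x) = Metric.infDist x (C : Set V))
    (w : V → ℕ)
    (hw : ∀ y ∈ C, w y = ((univ \ C).filter fun x => xc x = y).card + 1) :
    (∀ Tstar : Finset V, Tstar ⊆ C → Tstar.Nonempty →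
      ∑ y ∈ C, (w y : ℝ) * Metric.infDist y (Tstar : Set V) ≤
        2 * ∑ x : V, Metric.infDist x (Tstar : Set V)) ∧
    (∀ k : ℕ, 1 ≤ k → ∀ OPTC : ℝ,
      IsLeast {r : ℝ | ∃ S : Finset V, S ⊆ C ∧ S.Nonempty ∧ S.card ≤ k ∧
        r = ∑ x : V, Metric.infDist x (S : Set V)} OPTC →
      ∃ S : Finset V, S ⊆ C ∧ S.Nonempty ∧ S.card ≤ k ∧
        ∑ y ∈ C, (w y : ℝ) * Metric.infDist y (S : Set V) ≤ 2 * OPTC) := by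
  have main : ∀ Tstar : Finset V, Tstar ⊆ C → Tstar.Nonempty →
      ∑ y ∈ C, (w y : ℝ) * Metric.infDist y (Tstar : Set V) ≤
        2 * ∑ x : V, Metric.infDist x (Tstar : Set V) := by
    intro T hTC hT
    have hTne : (T : Set V).Nonempty := by exact_mod_cast hT
    have hsub : (T : Set V) ⊆ (C : Set V) := by exact_mod_cast hTC
    have hnn : ∀ x : V, 0 ≤ Metric.infDist x (T : Set V) := fun x => Metric.infDist_nonneg
    -- rewrite weights
    have hsplit : ∑ y ∈ C, (w y : ℝ) * Metric.infDist y (T : Set V)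
        = (∑ y ∈ C, (((univ \ C).filter fun x => xc x = y).card : ℝ)
            * Metric.infDist y (T : Set V))
          + ∑ y ∈ C, Metric.infDist y (T : Set V) := by
      rw [← Finset.sum_add_distrib]
      refine Finset.sum_congr rfl fun y hy => ?_
      rw [hw y hy]
      push_cast
      ring
    -- fiber sum
    have hfib : ∑ x ∈ univ \ C, Metric.infDist (xc x) (T : Set V)
        = ∑ y ∈ C, (((univ \ C).filter fun x => xc x = y).card : ℝ)
          * Metric.infDist y (T : Set V) := by
      rw [← Finset.sum_fiberwise_of_maps_to (g := xc) (fun x _ => (hxc x).1)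
        (fun x => Metric.infDist (xc x) (T : Set V))]
      refine Finset.sum_congr rfl fun y hy => ?_
      rw [Finset.sum_congr rfl (fun x hx => by
        rw [(Finset.mem_filter.mp hx).2]), Finset.sum_const, nsmul_eq_mul]
    -- pointwise bound
    have hpt : ∀ x : V, Metric.infDist (xc x) (T : Set V)
        ≤ 2 * Metric.infDist x (T : Set V) := by
      intro x
      have h1 : Metric.infDist (xc x) (T : Set V)
          ≤ Metric.infDist x (T : Set V) + dist (xc x) x :=
        Metric.infDist_le_infDist_add_dist
      have h2 : Metric.infDist x (C : Set V) ≤ Metric.infDist x (T : Set V) :=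
        Metric.infDist_le_infDist_of_subset hsub hTne
      have h3 : dist (xc x) x ≤ Metric.infDist x (T : Set V) := by
        rw [dist_comm, (hxc x).2]; exact h2
      linarith
    calc ∑ y ∈ C, (w y : ℝ) * Metric.infDist y (T : Set V)
        = (∑ x ∈ univ \ C, Metric.infDist (xc x) (T : Set V))
          + ∑ y ∈ C, Metric.infDist y (T : Set V) := by rw [hsplit, ← hfib]
      _ ≤ (∑ x ∈ univ \ C, 2 * Metric.infDist x (T : Set V))
          + ∑ y ∈ C, 2 * Metric.infDist y (T : Set V) := by
          gcongr with x hx y hy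
          · exact hpt x
          · nlinarith [hnn y]
      _ = 2 * ∑ x : V, Metric.infDist x (T : Set V) := by
          rw [← Finset.sum_sdiff (Finset.subset_univ C), mul_add,
            Finset.mul_sum, Finset.mul_sum]
  refine ⟨main, ?_⟩
  intro k _ OPTC hOPT
  obtain ⟨S, hSC, hSne, hSk, hval⟩ := hOPT.1
  exact ⟨S, hSC, hSne, hSk, by rw [hval]; exact main S hSC hSne⟩
end

section
/- Let (V,d) be a finite metric space, k ≥ 1, OPT the optimal k-median cost on V, and C ⊆ V with Σ_{x∈V} d(x,C) ≤ 3·OPT. Define weights w(y) = |{x ∈ V\C : x^C = y}| + 1 for y ∈ C. If S ⊆ C with |S| ≤ k satisfies Σ_{y∈C} w(y)·d(y,S) ≤ α · (min over k-subsets S' of C of Σ_{y∈C} w(y) d(y,S')), then Σ_{x∈V} d(x,S) ≤ (10α + 3)·OPT. -/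
open Finset

/-- If `Σ_x d(x,C) ≤ 3·OPT` and `S ⊆ C` is an `α`-approximate solution for the weighted
`k`-median instance `(C,w)`, then `Σ_x d(x,S) ≤ (10α+3)·OPT`. -/
theorem stmt8 {V : Type*} [MetricSpace V] [Fintype V] [DecidableEq V] [Nonempty V]
    (k : ℕ) (hk : 1 ≤ k) (α : ℝ) (hα : 1 ≤ α) (OPT : ℝ)
    (hOPT : IsLeast {r : ℝ | ∃ S : Finset V, S.Nonempty ∧ S.card ≤ k ∧
      r = ∑ x : V, Metric.infDist x (S : Set V)} OPT)
    (C : Finset V) (hC : C.Nonempty)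
    (hclose : ∑ x : V, Metric.infDist x (C : Set V) ≤ 3 * OPT)
    (xc : V → V) (hxc : ∀ x, xc x ∈ C ∧ dist x (xc x) = Metric.infDist x (C : Set V))
    (w : V → ℕ)
    (hw : ∀ y ∈ C, w y = ((univ \ C).filter fun x => xc x = y).card + 1)
    (S : Finset V) (hSC : S ⊆ C) (hSne : S.Nonempty) (hScard : S.card ≤ k)
    (happrox : ∀ S' : Finset V, S' ⊆ C → S'.Nonempty → S'.card ≤ k →
      ∑ y ∈ C, (w y : ℝ) * Metric.infDist y (S : Set V) ≤
        α * ∑ y ∈ C, (w y : ℝ) * Metric.infDist y (S' : Set V)) :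
    ∑ x : V, Metric.infDist x (S : Set V) ≤ (10 * α + 3) * OPT := by
  obtain ⟨hOPTmem, hOPTlb⟩ := hOPT
  obtain ⟨T, hTne, hTcard, hTeq⟩ := hOPTmem
  have hOPT0 : 0 ≤ OPT := by
    rw [hTeq]; exact Finset.sum_nonneg fun x _ => Metric.infDist_nonneg
  -- nearest point in a finite nonempty set
  have near : ∀ (x : V) (T : Finset V), T.Nonempty →
      ∃ t ∈ T, Metric.infDist x (T : Set V) = dist x t ∧ ∀ u ∈ T, dist x t ≤ dist x u := by
    intro x T hT
    obtain ⟨t, ht, hmin⟩ := T.exists_min_image (fun u => dist x u) hT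
    refine ⟨t, ht, le_antisymm (Metric.infDist_le_dist_of_mem (by exact_mod_cast ht)) ?_, hmin⟩
    by_contra h
    push_neg at h
    obtain ⟨u, hu, hlt⟩ := (Metric.infDist_lt_iff ⟨t, by exact_mod_cast ht⟩).1 h
    exact absurd (hmin u (by exact_mod_cast hu)) (not_le.2 hlt)
  -- decomposition of the weighted cost
  have decomp : ∀ T : Finset V,
      ∑ y ∈ C, (w y : ℝ) * Metric.infDist y (T : Set V)
        = ∑ y ∈ C, Metric.infDist y (T : Set V)
          + ∑ x ∈ univ \ C, Metric.infDist (xc x) (T : Set V) := by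
    intro T
    have h1 : ∑ x ∈ univ \ C, Metric.infDist (xc x) (T : Set V)
        = ∑ y ∈ C, ∑ x ∈ (univ \ C).filter (fun x => xc x = y),
            Metric.infDist (xc x) (T : Set V) :=
      (Finset.sum_fiberwise_of_maps_to (fun x _ => (hxc x).1) _).symm
    rw [h1, ← Finset.sum_add_distrib]
    refine Finset.sum_congr rfl fun y hy => ?_
    have h2 : ∑ x ∈ (univ \ C).filter (fun x => xc x = y),
        Metric.infDist (xc x) (T : Set V)
        = (((univ \ C).filter (fun x => xc x = y)).card : ℝ)
            * Metric.infDist y (T : Set V) := by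
      rw [Finset.sum_congr rfl (fun x hx => by rw [(Finset.mem_filter.1 hx).2]),
          Finset.sum_const, nsmul_eq_mul]
    rw [h2, hw y hy]
    push_cast
    ring
  -- Step 1: unweighted cost of S bounded via weighted cost
  have step1 : ∑ x : V, Metric.infDist x (S : Set V)
      ≤ (∑ y ∈ C, (w y : ℝ) * Metric.infDist y (S : Set V))
        + ∑ x : V, Metric.infDist x (C : Set V) := by
    rw [decomp S]
    have hsplit : ∑ x : V, Metric.infDist x (S : Set V)
        = ∑ x ∈ univ \ C, Metric.infDist x (S : Set V)
          + ∑ x ∈ C, Metric.infDist x (S : Set V) :=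
      (Finset.sum_sdiff (Finset.subset_univ C)).symm
    rw [hsplit]
    have h2 : ∑ x ∈ univ \ C, Metric.infDist x (S : Set V)
        ≤ ∑ x ∈ univ \ C, Metric.infDist (xc x) (S : Set V)
          + ∑ x ∈ univ \ C, Metric.infDist x (C : Set V) := by
      rw [← Finset.sum_add_distrib]
      refine Finset.sum_le_sum fun x _ => ?_
      calc Metric.infDist x (S : Set V)
          ≤ Metric.infDist (xc x) (S : Set V) + dist x (xc x) :=
            Metric.infDist_le_infDist_add_dist
        _ = Metric.infDist (xc x) (S : Set V) + Metric.infDist x (C : Set V) := by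
            rw [(hxc x).2]
    have h3 : ∑ x ∈ univ \ C, Metric.infDist x (C : Set V)
        ≤ ∑ x : V, Metric.infDist x (C : Set V) :=
      Finset.sum_le_sum_of_subset_of_nonneg (Finset.sdiff_subset)
        (fun x _ _ => Metric.infDist_nonneg)
    have := add_le_add h2 (le_refl (∑ x ∈ C, Metric.infDist x (S : Set V)))
    calc ∑ x ∈ univ \ C, Metric.infDist x (S : Set V)
          + ∑ x ∈ C, Metric.infDist x (S : Set V)
        ≤ (∑ x ∈ univ \ C, Metric.infDist (xc x) (S : Set V)
            + ∑ x ∈ univ \ C, Metric.infDist x (C : Set V))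
          + ∑ x ∈ C, Metric.infDist x (S : Set V) := this
      _ ≤ (∑ y ∈ C, Metric.infDist y (S : Set V)
            + ∑ x ∈ univ \ C, Metric.infDist (xc x) (S : Set V))
          + ∑ x : V, Metric.infDist x (C : Set V) := by
          have := h3; linarith
  -- Step 2: a good candidate S' ⊆ C
  set S' : Finset V := T.image xc with hS'
  have hS'C : S' ⊆ C := by
    intro y hy
    obtain ⟨t, _, rfl⟩ := Finset.mem_image.1 hy
    exact (hxc t).1
  have hS'ne : S'.Nonempty := hTne.image xc
  have hS'card : S'.card ≤ k := le_trans (Finset.card_image_le) hTcard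
  -- d(y,S') ≤ 2 d(y,T) for y ∈ C
  have hproj : ∀ y ∈ C, Metric.infDist y (S' : Set V) ≤ 2 * Metric.infDist y (T : Set V) := by
    intro y hy
    obtain ⟨t, htT, hteq, -⟩ := near y T hTne
    have hmem : xc t ∈ S' := Finset.mem_image_of_mem xc htT
    calc Metric.infDist y (S' : Set V) ≤ dist y (xc t) :=
          Metric.infDist_le_dist_of_mem (by exact_mod_cast hmem)
      _ ≤ dist y t + dist t (xc t) := dist_triangle _ _ _
      _ ≤ dist y t + dist t y := by
          have : dist t (xc t) ≤ dist t y := by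
            rw [(hxc t).2]
            exact Metric.infDist_le_dist_of_mem (by exact_mod_cast hy)
          linarith
      _ = 2 * Metric.infDist y (T : Set V) := by rw [hteq, dist_comm t y]; ring
  -- weighted cost of T is at most 4·OPT
  have hWT : ∑ y ∈ C, (w y : ℝ) * Metric.infDist y (T : Set V) ≤ 4 * OPT := by
    rw [decomp T]
    have h2 : ∑ x ∈ univ \ C, Metric.infDist (xc x) (T : Set V)
        ≤ ∑ x ∈ univ \ C, Metric.infDist x (T : Set V)
          + ∑ x ∈ univ \ C, Metric.infDist x (C : Set V) := by
      rw [← Finset.sum_add_distrib]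
      refine Finset.sum_le_sum fun x _ => ?_
      calc Metric.infDist (xc x) (T : Set V)
          ≤ Metric.infDist x (T : Set V) + dist (xc x) x :=
            Metric.infDist_le_infDist_add_dist
        _ = Metric.infDist x (T : Set V) + Metric.infDist x (C : Set V) := by
            rw [dist_comm, (hxc x).2]
    have hsplit : ∑ x : V, Metric.infDist x (T : Set V)
        = ∑ x ∈ univ \ C, Metric.infDist x (T : Set V)
          + ∑ x ∈ C, Metric.infDist x (T : Set V) :=
      (Finset.sum_sdiff (Finset.subset_univ C)).symm
    have h3 : ∑ x ∈ univ \ C, Metric.infDist x (C : Set V)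
        ≤ ∑ x : V, Metric.infDist x (C : Set V) :=
      Finset.sum_le_sum_of_subset_of_nonneg (Finset.sdiff_subset)
        (fun x _ _ => Metric.infDist_nonneg)
    have hT4 : ∑ x : V, Metric.infDist x (T : Set V) = OPT := hTeq.symm
    rw [hsplit] at hT4
    linarith
  -- weighted cost of S' is at most 8·OPT
  have hWS' : ∑ y ∈ C, (w y : ℝ) * Metric.infDist y (S' : Set V) ≤ 8 * OPT := by
    have : ∑ y ∈ C, (w y : ℝ) * Metric.infDist y (S' : Set V)
        ≤ ∑ y ∈ C, (w y : ℝ) * (2 * Metric.infDist y (T : Set V)) := by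
      refine Finset.sum_le_sum fun y hy => ?_
      exact mul_le_mul_of_nonneg_left (hproj y hy) (Nat.cast_nonneg _)
    have h2 : ∑ y ∈ C, (w y : ℝ) * (2 * Metric.infDist y (T : Set V))
        = 2 * ∑ y ∈ C, (w y : ℝ) * Metric.infDist y (T : Set V) := by
      rw [Finset.mul_sum]; exact Finset.sum_congr rfl fun y _ => by ring
    linarith
  -- conclude
  have hWS : ∑ y ∈ C, (w y : ℝ) * Metric.infDist y (S : Set V)
      ≤ α * (8 * OPT) := by
    refine le_trans (happrox S' hS'C hS'ne hS'card) ?_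
    exact mul_le_mul_of_nonneg_left hWS' (by linarith)
  nlinarith [step1, hclose, hWS, hOPT0, hα]
end

section
/- Let (V,d) be a finite metric space partitioned into disjoint nonempty sets S_1, …, S_ℓ, and let k ≥ 1. For each i, let OPT_i = min over subsets T ⊆ S_i with |T| ≤ k of Σ_{x∈S_i} d(x,T), and let OPT = min over subsets T ⊆ V with |T| ≤ k of Σ_{x∈V} d(x,T). Then Σ_{i=1}^ℓ OPT_i ≤ 2·OPT. -/
open Finset

/-- (Guha et al., Theorem 2.2) For any partition of `V` into nonempty parts `S_1,…,S_ℓ`,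
the sum of the per-part optimal `k`-median costs is at most twice the global optimum. -/
theorem stmt9 {V : Type*} [MetricSpace V] [Fintype V] [DecidableEq V]
    (ℓ k : ℕ) (hk : 1 ≤ k)
    (P : Fin ℓ → Finset V) (hne : ∀ i, (P i).Nonempty)
    (hdisj : ∀ i j, i ≠ j → Disjoint (P i) (P j))
    (hcover : univ.biUnion P = univ)
    (OPTi : Fin ℓ → ℝ)
    (hOPTi : ∀ i, IsLeast {r : ℝ | ∃ T : Finset V, T ⊆ P i ∧ T.Nonempty ∧ T.card ≤ k ∧
      r = ∑ x ∈ P i, Metric.infDist x (T : Set V)} (OPTi i))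
    (OPT : ℝ)
    (hOPT : IsLeast {r : ℝ | ∃ T : Finset V, T.Nonempty ∧ T.card ≤ k ∧
      r = ∑ x : V, Metric.infDist x (T : Set V)} OPT) :
    ∑ i, OPTi i ≤ 2 * OPT := by
  classical
  obtain ⟨⟨T, hTne, hTk, hOPTeq⟩, _⟩ := hOPT
  choose near hnear hnearmin using fun (i : Fin ℓ) (t : V) =>
    (P i).exists_min_image (fun p => dist t p) (hne i)
  have key : ∀ i : Fin ℓ, OPTi i ≤ ∑ x ∈ P i, 2 * Metric.infDist x (T : Set V) := by
    intro i
    have h1 : OPTi i ≤ ∑ x ∈ P i, Metric.infDist x ((T.image (near i) : Finset V) : Set V) :=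
      (hOPTi i).2 ⟨T.image (near i),
        image_subset_iff.2 (fun t _ => hnear i t),
        hTne.image _, (card_image_le).trans hTk, rfl⟩
    refine h1.trans (Finset.sum_le_sum ?_)
    intro x hx
    obtain ⟨t, htT, ht⟩ := (T.finite_toSet.isCompact).exists_infDist_eq_dist
      (by exact_mod_cast hTne) x
    have hmem : near i t ∈ (T.image (near i) : Set V) := by
      simp only [coe_image, Set.mem_image]
      exact ⟨t, htT, rfl⟩
    have h2 : Metric.infDist x ((T.image (near i) : Finset V) : Set V) ≤ dist x (near i t) :=
      Metric.infDist_le_dist_of_mem hmem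
    have h3 : dist t (near i t) ≤ dist t x := hnearmin i t x hx
    calc Metric.infDist x ((T.image (near i) : Finset V) : Set V)
        ≤ dist x (near i t) := h2
      _ ≤ dist x t + dist t (near i t) := dist_triangle _ _ _
      _ ≤ dist x t + dist t x := by linarith
      _ = 2 * dist x t := by rw [dist_comm t x]; ring
      _ = 2 * Metric.infDist x (T : Set V) := by rw [ht]
  have hsum : ∑ i, OPTi i ≤ ∑ i, ∑ x ∈ P i, 2 * Metric.infDist x (T : Set V) :=
    Finset.sum_le_sum (fun i _ => key i)
  have hpart : ∑ i, ∑ x ∈ P i, 2 * Metric.infDist x (T : Set V)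
      = ∑ x : V, 2 * Metric.infDist x (T : Set V) := by
    rw [← Finset.sum_biUnion, hcover]
    intro i _ j _ hij
    exact hdisj i j hij
  rw [hOPTeq]
  calc ∑ i, OPTi i ≤ ∑ x : V, 2 * Metric.infDist x (T : Set V) := hpart ▸ hsum
    _ = 2 * ∑ x : V, Metric.infDist x (T : Set V) := by rw [Finset.mul_sum]
end

section
/- Let (V,d) be a finite metric space, k ≥ 1, and let OPT(V,V) and OPT(V,C) denote the optimal k-median costs with centers chosen from V and from a nonempty subset C ⊆ V respectively. Then OPT(V,V) ≤ OPT(V,C), and if additionally Σ_{x∈V} d(x,C) ≤ β·OPT(V,V) for some β ≥ 0, then OPT(V,C) ≤ (2 + β)·OPT(V,V). -/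
/-- `OPT(V,V) ≤ OPT(V,C)`, and if `Σ_x d(x,C) ≤ β·OPT(V,V)` then
`OPT(V,C) ≤ (2+β)·OPT(V,V)`. -/
theorem stmt19 {V : Type*} [MetricSpace V] [Fintype V] [Nonempty V]
    (k : ℕ) (hk : 1 ≤ k) (C : Finset V) (hC : C.Nonempty)
    (OPTV OPTC : ℝ)
    (hOPTV : IsLeast {r : ℝ | ∃ S : Finset V, S.Nonempty ∧ S.card ≤ k ∧
      r = ∑ x : V, Metric.infDist x (S : Set V)} OPTV)
    (hOPTC : IsLeast {r : ℝ | ∃ S : Finset V, S ⊆ C ∧ S.Nonempty ∧ S.card ≤ k ∧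
      r = ∑ x : V, Metric.infDist x (S : Set V)} OPTC) :
    OPTV ≤ OPTC ∧
    ∀ β : ℝ, 0 ≤ β → (∑ x : V, Metric.infDist x (C : Set V)) ≤ β * OPTV →
      OPTC ≤ (2 + β) * OPTV := by
  classical
  constructor
  · obtain ⟨S, _, hSne, hScard, hr⟩ := hOPTC.1
    exact hOPTV.2 ⟨S, hSne, hScard, hr⟩
  · intro β hβ hsum
    obtain ⟨S, hSne, hScard, hr⟩ := hOPTV.1
    -- choose nearest point in C for each s
    have hc : ∀ s : V, ∃ y ∈ C, ∀ z ∈ C, dist s y ≤ dist s z := fun s =>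
      C.exists_min_image (fun c => dist s c) hC
    choose c hcC hcmin using hc
    set T : Finset V := S.image c with hT
    have hTC : T ⊆ C := by
      intro y hy
      obtain ⟨s, _, rfl⟩ := Finset.mem_image.1 hy
      exact hcC s
    have hTne : T.Nonempty := hSne.image c
    have hTcard : T.card ≤ k := le_trans (Finset.card_image_le) hScard
    have key : ∀ x : V, Metric.infDist x (T : Set V) ≤
        2 * Metric.infDist x (S : Set V) + Metric.infDist x (C : Set V) := by
      intro x
      obtain ⟨s, hsS, hs⟩ := (S.finite_toSet.isCompact).exists_infDist_eq_dist
        (by exact_mod_cast hSne) x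
      obtain ⟨y, hyC, hy⟩ := (C.finite_toSet.isCompact).exists_infDist_eq_dist
        (by exact_mod_cast hC) x
      have h1 : Metric.infDist x (T : Set V) ≤ dist x (c s) :=
        Metric.infDist_le_dist_of_mem (by
          exact_mod_cast Finset.mem_image_of_mem c hsS)
      have h2 : dist x (c s) ≤ dist x s + dist s (c s) := dist_triangle _ _ _
      have h3 : dist s (c s) ≤ dist s y := hcmin s y (by exact_mod_cast hyC)
      have h4 : dist s y ≤ dist s x + dist x y := dist_triangle _ _ _
      rw [hs, hy]
      have := dist_comm s x
      linarith [dist_comm s x]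
    have hle : OPTC ≤ ∑ x : V, Metric.infDist x (T : Set V) :=
      hOPTC.2 ⟨T, hTC, hTne, hTcard, rfl⟩
    calc OPTC ≤ ∑ x : V, Metric.infDist x (T : Set V) := hle
      _ ≤ ∑ x : V, (2 * Metric.infDist x (S : Set V) + Metric.infDist x (C : Set V)) :=
          Finset.sum_le_sum fun x _ => key x
      _ = 2 * OPTV + ∑ x : V, Metric.infDist x (C : Set V) := by
          rw [Finset.sum_add_distrib, ← Finset.mul_sum, hr]
      _ ≤ 2 * OPTV + β * OPTV := by linarith
      _ = (2 + β) * OPTV := by ring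
end
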